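/- arXiv:1803.10412 — 2 statements merged into one kernel-verified Lean document; each statement's English description precedes it below -/
import Mathlib

section
/- Let G be a local groupoid satisfying the inverse-decomposition property (as in the two-sided decomposition of any composable pair into invertible factors). Define an associator at x ∈ M to be an element g with s(g) = t(g) = x such that some well-formed word w admits both a sequence of contractions ending at the one-letter word (g) and a sequence of contractions ending at the one-letter word (u(x)). Then the kernel of the completion map G → AC(G) (the set of arrows mapped to a unit of AC(G)) is exactly the set of all associators of G. -/
/-- An (algebraic) local groupoid over a base `M`: a set of arrows `G` with source,
target, unit, a partially defined multiplication (with domain `D`) satisfying the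
unit laws and 3-associativity wherever defined. -/
structure LocalGroupoid (G : Type*) (M : Type*) where
  s : G → M
  t : G → M
  unit : M → G
  s_unit : ∀ x, s (unit x) = x
  t_unit : ∀ x, t (unit x) = x
  /-- the domain of the multiplication -/
  D : G → G → Prop
  D_st : ∀ {g h}, D g h → s g = t h
  mul : G → G → G
  D_unit_right : ∀ g, D g (unit (s g))
  D_unit_left : ∀ g, D (unit (t g)) g
  s_mul : ∀ {g h}, D g h → s (mul g h) = s h
  t_mul : ∀ {g h}, D g h → t (mul g h) = t g
  mul_unit_right : ∀ g, mul g (unit (s g)) = g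
  unit_mul : ∀ g, mul (unit (t g)) g = g
  assoc3 : ∀ {g h k}, D g h → D (mul g h) k → D h k → D g (mul h k) →
    mul (mul g h) k = mul g (mul h k)

namespace LocalGroupoid

variable {G : Type*} {M : Type*} (L : LocalGroupoid G M)

/-- A well-formed word: a nonempty list `(w₁, …, wₙ)` of arrows with
`s wᵢ = t wᵢ₊₁`. -/
def WFWord (w : List G) : Prop := w ≠ [] ∧ w.Chain' (fun a b => L.s a = L.t b)

/-- An elementary contraction of words: replace an adjacent pair whose product is
defined by the product. -/
inductive Contr : List G → List G → Prop
  | mk (p q : List G) {g h : G} (hD : L.D g h) :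
      Contr (p ++ g :: h :: q) (p ++ L.mul g h :: q)

/-- The equivalence relation on words generated by contractions and expansions. -/
def WordEquiv : List G → List G → Prop := Relation.EqvGen L.Contr

/-- `ContractsTo w v`: `v` is obtained from `w` by a finite sequence of contractions
(equivalently, `w` is obtained from `v` by expansions, i.e. `v ≤ w`). -/
def ContractsTo : List G → List G → Prop := Relation.ReflTransGen L.Contr

/-- The type of well-formed words. -/
def Word := {w : List G // L.WFWord w}

instance wordSetoid : Setoid L.Word :=
  ⟨fun a b => L.WordEquiv a.1 b.1, by
    constructor
    · exact fun a => Relation.EqvGen.refl _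
    · exact fun h => Relation.EqvGen.symm _ _ h
    · exact fun h1 h2 => Relation.EqvGen.trans _ _ _ h1 h2⟩

/-- The associative completion of a local groupoid: well-formed words modulo
contractions and expansions. -/
def AC := Quotient L.wordSetoid

/-- The one-letter word `(g)`. -/
def singletonWord (g : G) : L.Word := ⟨[g], by simp [WFWord, List.Chain']⟩

/-- The completion map `G → AC(G)`. -/
def completion (g : G) : L.AC := Quotient.mk _ (L.singletonWord g)

/-- Target of a well-formed word: the target of its first letter. -/
def wordTgt (w : L.Word) : M := L.t (w.1.head w.2.1)

/-- Source of a well-formed word: the source of its last letter. -/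
def wordSrc (w : L.Word) : M := L.s (w.1.getLast w.2.1)

/-- `b` is a two-sided inverse of `a`. -/
def InvPair (a b : G) : Prop :=
  L.D a b ∧ L.D b a ∧ L.mul a b = L.unit (L.t a) ∧ L.mul b a = L.unit (L.s a)

/-- An arrow is invertible if it has a two-sided inverse. -/
def Invertible (a : G) : Prop := ∃ b, L.InvPair a b

/-- `LProd as seed r`: `r = a₁ (a₂ (⋯ (aₖ seed)))` where `as = [a₁, …, aₖ]`, all
products being defined. -/
inductive LProd : List G → G → G → Prop
  | nil (g : G) : LProd [] g g
  | cons {as : List G} {g p : G} (a : G) : LProd as g p → L.D a p → LProd (a :: as) g (L.mul a p)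

/-- `RProd seed bs r`: `r = ((⋯((seed b₁) b₂)⋯) bₖ)` where `bs = [b₁, …, bₖ]`, all
products being defined. -/
inductive RProd : G → List G → G → Prop
  | nil (g : G) : RProd g [] g
  | cons {bs : List G} {g r : G} (b : G) (hD : L.D g b) : RProd (L.mul g b) bs r → RProd g (b :: bs) r

/-- The inverse-decomposition property: every composable pair `(g,h)` decomposes
through invertible elements, either on the left:
`g = aₗ(⋯(a₂ a₁))` and `h = a₁⁻¹(⋯(aₗ⁻¹ (gh)))`, or on the right:
`h = ((b₁ b₂)⋯)bₘ` and `g = (((gh) bₘ⁻¹)⋯) b₁⁻¹`. -/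
def InvDecomp : Prop :=
  ∀ g h, L.D g h →
    (∃ a : List (G × G), (∀ p ∈ a, L.InvPair p.1 p.2) ∧
        L.LProd (a.map Prod.fst).reverse (L.unit (L.s g)) g ∧
        L.LProd (a.map Prod.snd) (L.mul g h) h) ∨
    (∃ b : List (G × G), (∀ p ∈ b, L.InvPair p.1 p.2) ∧
        L.RProd (L.unit (L.t h)) (b.map Prod.fst) h ∧
        L.RProd (L.mul g h) (b.map Prod.snd).reverse g)

/-- An associator at `x`: an arrow `g` with `s g = t g = x` such that some
well-formed word can be contracted both to `(g)` and to `(u x)`. -/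
def IsAssociator (x : M) (g : G) : Prop :=
  L.s g = x ∧ L.t g = x ∧
    ∃ w, L.WFWord w ∧ L.ContractsTo w [g] ∧ L.ContractsTo w [L.unit x]

/-- An arrow is inversional if it is a well-defined product of invertible elements. -/
def Inversional (g : G) : Prop :=
  ∃ w : List G, L.WFWord w ∧ (∀ a ∈ w, L.Invertible a) ∧ L.ContractsTo w [g]

/-- `EvalsTo w g`: some full bracketing of the word `w` can be evaluated (all
intermediate products being defined), with result `g`. -/
inductive EvalsTo : List G → G → Prop
  | single (g : G) : EvalsTo [g] g
  | mul {w1 w2 : List G} {g h : G} : EvalsTo w1 g → EvalsTo w2 h → L.D g h →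
      EvalsTo (w1 ++ w2) (L.mul g h)

/-- Global associativity: all defined bracketings of a composable tuple agree. -/
def GloballyAssociative : Prop := ∀ w g h, L.EvalsTo w g → L.EvalsTo w h → g = h

end LocalGroupoid

/-- A morphism of local groupoids. -/
structure IsMorphism {G₁ M₁ G₂ M₂ : Type*} (L₁ : LocalGroupoid G₁ M₁)
    (L₂ : LocalGroupoid G₂ M₂) (F : G₁ → G₂) (f : M₁ → M₂) : Prop where
  map_s : ∀ g, L₂.s (F g) = f (L₁.s g)
  map_t : ∀ g, L₂.t (F g) = f (L₁.t g)
  map_unit : ∀ x, F (L₁.unit x) = L₂.unit (f x)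
  map_D : ∀ {g h}, L₁.D g h → L₂.D (F g) (F h)
  map_mul : ∀ {g h}, L₁.D g h → F (L₁.mul g h) = L₂.mul (F g) (F h)

/-- A local groupoid is global (an honest groupoid) if multiplication is defined for
all matching pairs and every arrow is invertible. -/
structure IsGlobal {G M : Type*} (L : LocalGroupoid G M) : Prop where
  total : ∀ {g h}, L.s g = L.t h → L.D g h
  inv : ∀ g, L.Invertible g


namespace LocalGroupoid

section Aux

variable {G : Type*} {M : Type*} {L : LocalGroupoid G M}

theorem contr_ctx (p q : List G) {W V : List G} (h : L.Contr W V) :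
    L.Contr (p ++ W ++ q) (p ++ V ++ q) := by
  cases h with
  | mk pp qq hD =>
    have := Contr.mk (L := L) (p ++ pp) (qq ++ q) hD
    simpa [List.append_assoc] using this

theorem contractsTo_ctx (p q : List G) {W V : List G} (h : L.ContractsTo W V) :
    L.ContractsTo (p ++ W ++ q) (p ++ V ++ q) :=
  Relation.ReflTransGen.lift (fun w => p ++ w ++ q) (fun _ _ hab => contr_ctx p q hab) _ _ h

theorem contractsTo_append {X Y u w : List G} (h1 : L.ContractsTo X u)
    (h2 : L.ContractsTo Y w) : L.ContractsTo (X ++ Y) (u ++ w) := by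
  have a1 := contractsTo_ctx ([] : List G) Y h1
  have a2 := contractsTo_ctx u ([] : List G) h2
  simp at a1 a2
  exact a1.trans a2

theorem EvalsTo.contractsTo {W : List G} {v : G} (h : L.EvalsTo W v) :
    L.ContractsTo W [v] := by
  induction h with
  | single g => exact .refl
  | @mul w1 w2 g hh h1 h2 hD ih1 ih2 =>
    have c : L.ContractsTo (w1 ++ w2) [g, hh] := by
      simpa using contractsTo_append ih1 ih2
    refine c.tail ?_
    simpa using Contr.mk (L := L) [] [] hD

theorem EvalsTo.exists_head {W : List G} {v : G} (h : L.EvalsTo W v) :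
    ∃ a As, W = a :: As ∧ L.t a = L.t v := by
  induction h with
  | single g => exact ⟨g, [], rfl, rfl⟩
  | @mul w1 w2 g hh h1 h2 hD ih1 ih2 =>
    obtain ⟨a, As, rfl, ht⟩ := ih1
    exact ⟨a, As ++ w2, by simp, by rw [L.t_mul hD]; exact ht⟩

theorem EvalsTo.exists_last {W : List G} {v : G} (h : L.EvalsTo W v) :
    ∃ As a, W = As ++ [a] ∧ L.s a = L.s v := by
  induction h with
  | single g => exact ⟨[], g, rfl, rfl⟩
  | @mul w1 w2 g hh h1 h2 hD ih1 ih2 =>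
    obtain ⟨As, a, rfl, hs⟩ := ih2
    exact ⟨w1 ++ As, a, by simp, by rw [L.s_mul hD]; exact hs⟩

theorem EvalsTo.wf {W : List G} {v : G} (h : L.EvalsTo W v) : L.WFWord W := by
  induction h with
  | single g => exact ⟨by simp, by simp [List.Chain']⟩
  | @mul w1 w2 g hh h1 h2 hD ih1 ih2 =>
    refine ⟨?_, ?_⟩
    · intro hc
      exact ih1.1 (List.append_eq_nil_iff.mp hc).1
    · simp only [List.Chain', List.isChain_append]
      refine ⟨ih1.2, ih2.2, ?_⟩
      intro x hx y hy
      obtain ⟨As, a, rfl, hs⟩ := h1.exists_last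
      obtain ⟨b, Bs, rfl, htb⟩ := h2.exists_head
      simp [List.getLast?_concat] at hx
      simp at hy
      subst hx; subst hy
      rw [hs, htb]
      exact L.D_st hD

theorem EvalsTo.subst {W : List G} {v : G} (h : L.EvalsTo W v) :
    ∀ {p q A : List G} {a : G}, W = p ++ a :: q → L.EvalsTo A a →
      L.EvalsTo (p ++ (A ++ q)) v := by
  induction h with
  | single g =>
    intro p q A a hEq hA
    rcases p with _ | ⟨x, xs⟩
    · simp at hEq
      obtain ⟨rfl, rfl⟩ := hEq
      simpa using hA
    · exact absurd (congrArg List.length hEq) (by simp)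
  | @mul w1 w2 g hh h1 h2 hD ih1 ih2 =>
    intro p q A a hEq hA
    rcases List.append_eq_append_iff.mp hEq with ⟨r, hp, hw2⟩ | ⟨r, hw1, hq⟩
    · have := EvalsTo.mul h1 (ih2 hw2 hA) hD
      subst hp
      simpa [List.append_assoc] using this
    · rcases r with _ | ⟨x, xs⟩
      · simp at hw1 hq
        subst hw1
        have := EvalsTo.mul h1 (ih2 (show w2 = [] ++ a :: q from hq.symm) hA) hD
        simpa using this
      · simp at hq
        obtain ⟨rfl, rfl⟩ := hq
        have := EvalsTo.mul (ih1 hw1 hA) h2 hD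
        simpa [List.append_assoc] using this

/-- Block decomposition of a word over a target word. -/
inductive Blocks (L : LocalGroupoid G M) : List G → List G → Prop
  | nil : Blocks L [] []
  | cons {B W : List G} {k : G} {v : List G} :
      L.EvalsTo B k → Blocks L W v → Blocks L (B ++ W) (k :: v)

theorem blocks_refl (v : List G) : Blocks L v v := by
  induction v with
  | nil => exact .nil
  | cons k v' ih => simpa using Blocks.cons (L := L) (.single k) ih

theorem Blocks.subst {X v : List G} (h : Blocks L X v) :
    ∀ {p q A : List G} {x : G}, X = p ++ x :: q → L.EvalsTo A x →
      Blocks L (p ++ (A ++ q)) v := by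
  induction h with
  | nil =>
    intro p q A x hEq _
    exact absurd hEq.symm (by simp)
  | @cons B W k v hB hW ih =>
    intro p q A x hEq hA
    rcases List.append_eq_append_iff.mp hEq with ⟨r, hp, hw⟩ | ⟨r, hb, hq⟩
    · have := Blocks.cons hB (ih hw hA)
      subst hp
      simpa [List.append_assoc] using this
    · rcases r with _ | ⟨y, ys⟩
      · simp at hb hq
        subst hb
        have := Blocks.cons hB (ih (show W = [] ++ x :: q from hq.symm) hA)
        simpa using this
      · simp at hq
        obtain ⟨rfl, rfl⟩ := hq
        have := Blocks.cons (hB.subst hb hA) hW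
        simpa [List.append_assoc] using this

theorem ContractsTo.blocks {W v : List G} (h : L.ContractsTo W v) : Blocks L W v := by
  induction h using Relation.ReflTransGen.head_induction_on with
  | refl => exact blocks_refl v
  | head hstep _ ih =>
    cases hstep with
    | @mk p q g h hD =>
      have hgh : L.EvalsTo [g, h] (L.mul g h) := by
        simpa using EvalsTo.mul (L := L) (.single g) (.single h) hD
      have := ih.subst rfl hgh
      simpa using this

theorem blocks_single {W : List G} {k : G} (h : Blocks L W [k]) : L.EvalsTo W k := by
  cases h with
  | cons hB hrest => cases hrest; simpa using hB

end Aux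

end LocalGroupoid

namespace LocalGroupoid

section Aux2

variable {G : Type*} {M : Type*} {L : LocalGroupoid G M}

theorem RProd.evals {seed r : G} {l : List G} (h : L.RProd seed l r) :
    ∀ {X : List G}, L.EvalsTo X seed → L.EvalsTo (X ++ l) r := by
  induction h with
  | nil g => intro X hX; simpa using hX
  | @cons bs g rr b hD hrest ih =>
    intro X hX
    have h1 : L.EvalsTo (X ++ [b]) (L.mul g b) := EvalsTo.mul hX (.single b) hD
    have := ih h1
    simpa [List.append_assoc] using this

theorem LProd.evals {seed r : G} {l : List G} (h : L.LProd l seed r) :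
    ∀ {X : List G}, L.EvalsTo X seed → L.EvalsTo (l ++ X) r := by
  induction h with
  | nil g => intro X hX; exact hX
  | @cons as g p a hrest hD ih =>
    intro X hX
    have := EvalsTo.mul (.single a) (ih hX) hD
    simpa using this

theorem lprod_snoc : ∀ {l : List G} {x s r : G}, L.LProd (l ++ [x]) s r →
    L.D x s ∧ L.LProd l (L.mul x s) r := by
  intro l
  induction l with
  | nil =>
    intro x s r h
    cases h with
    | cons a hrest hD =>
      cases hrest
      exact ⟨hD, .nil _⟩
  | cons y l ih =>
    intro x s r h
    cases h with
    | cons a hrest hD =>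
      obtain ⟨h1, h2⟩ := ih hrest
      exact ⟨h1, .cons y h2 hD⟩

theorem claimA : ∀ (b : List (G × G)) {h' r : G} {X : List G},
    (∀ p ∈ b, L.InvPair p.1 p.2) → L.RProd r (b.map Prod.fst) h' →
    L.EvalsTo X (L.unit (L.s r)) →
    L.EvalsTo ((b.map Prod.snd).reverse ++ (X ++ b.map Prod.fst)) (L.unit (L.s h')) := by
  intro b
  induction b with
  | nil =>
    intro h' r X _ hR hX
    cases hR
    simpa using hX
  | cons pr b' ih =>
    intro h' r X hinv hR hX
    obtain ⟨b1, d1⟩ := pr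
    cases hR with
    | cons _ hD hrest =>
      have hip : L.InvPair b1 d1 := hinv (b1, d1) (by simp)
      have hsd1 : L.s d1 = L.t b1 := L.D_st hip.2.1
      have hsr : L.s r = L.t b1 := L.D_st hD
      have e1 : L.EvalsTo (d1 :: X) (L.mul d1 (L.unit (L.s r))) :=
        EvalsTo.mul (.single d1) hX (by rw [hsr, ← hsd1]; exact L.D_unit_right d1)
      have e1' : L.EvalsTo (d1 :: X) d1 := by
        rw [hsr, ← hsd1, L.mul_unit_right] at e1; exact e1
      have e2 : L.EvalsTo ((d1 :: X) ++ [b1]) (L.mul d1 b1) :=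
        EvalsTo.mul e1' (.single b1) hip.2.1
      have e2' : L.EvalsTo (d1 :: (X ++ [b1])) (L.unit (L.s (L.mul r b1))) := by
        rw [L.s_mul hD]
        rw [hip.2.2.2] at e2
        simpa using e2
      have := ih (fun p hp => hinv p (by simp [hp])) hrest e2'
      simpa [List.append_assoc] using this

theorem claimB : ∀ (a : List (G × G)) {g' r : G} {X : List G},
    (∀ p ∈ a, L.InvPair p.1 p.2) → L.LProd ((a.map Prod.fst).reverse) r g' →
    L.EvalsTo X (L.unit (L.t r)) →
    L.EvalsTo ((a.map Prod.fst).reverse ++ (X ++ a.map Prod.snd)) (L.unit (L.t g')) := by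
  intro a
  induction a with
  | nil =>
    intro g' r X _ hL hX
    cases hL
    simpa using hX
  | cons pr a' ih =>
    intro g' r X hinv hL hX
    obtain ⟨a1, c1⟩ := pr
    have hL' : L.LProd ((a'.map Prod.fst).reverse ++ [a1]) r g' := by simpa using hL
    obtain ⟨hD, hrest⟩ := lprod_snoc hL'
    have hip : L.InvPair a1 c1 := hinv (a1, c1) (by simp)
    have hsa1 : L.s a1 = L.t r := L.D_st hD
    have e1 : L.EvalsTo (a1 :: X) (L.mul a1 (L.unit (L.t r))) :=
      EvalsTo.mul (.single a1) hX (by rw [← hsa1]; exact L.D_unit_right a1)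
    have e1' : L.EvalsTo (a1 :: X) a1 := by
      rw [← hsa1, L.mul_unit_right] at e1; exact e1
    have e2 : L.EvalsTo ((a1 :: X) ++ [c1]) (L.mul a1 c1) :=
      EvalsTo.mul e1' (.single c1) hip.1
    have e2' : L.EvalsTo (a1 :: (X ++ [c1])) (L.unit (L.t (L.mul a1 r))) := by
      rw [L.t_mul hD]
      rw [hip.2.2.1] at e2
      simpa using e2
    have := ih (fun p hp => hinv p (by simp [hp])) hrest e2'
    simpa [List.append_assoc] using this

theorem key (hID : L.InvDecomp) {g h : G} (hD : L.D g h) :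
    ∃ pre post : List G,
      (pre = [] ∨ L.EvalsTo pre (L.unit (L.t (L.mul g h)))) ∧
      (post = [] ∨ L.EvalsTo post (L.unit (L.s (L.mul g h)))) ∧
      ∀ X, L.EvalsTo X (L.mul g h) →
        ∃ Bg Bh, pre ++ X ++ post = Bg ++ Bh ∧ L.EvalsTo Bg g ∧ L.EvalsTo Bh h := by
  rcases hID g h hD with ⟨a, hinv, hLf, hLs⟩ | ⟨b, hinv, hRf, hRs⟩
  · refine ⟨(a.map Prod.fst).reverse ++ L.unit (L.s g) :: a.map Prod.snd, [],
      Or.inr ?_, Or.inl rfl, ?_⟩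
    · have hx : L.EvalsTo [L.unit (L.s g)] (L.unit (L.t (L.unit (L.s g)))) := by
        rw [L.t_unit]; exact .single _
      have := claimB a hinv hLf hx
      rw [L.t_mul hD]
      simpa [List.append_assoc] using this
    · intro X hX
      refine ⟨(a.map Prod.fst).reverse ++ [L.unit (L.s g)], a.map Prod.snd ++ X,
        by simp, ?_, ?_⟩
      · exact hLf.evals (.single _)
      · exact hLs.evals hX
  · refine ⟨[], (b.map Prod.snd).reverse ++ L.unit (L.t h) :: b.map Prod.fst,
      Or.inl rfl, Or.inr ?_, ?_⟩
    · have hx : L.EvalsTo [L.unit (L.t h)] (L.unit (L.s (L.unit (L.t h)))) := by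
        rw [L.s_unit]; exact .single _
      have := claimA b hinv hRf hx
      rw [L.s_mul hD]
      simpa [List.append_assoc] using this
    · intro X hX
      refine ⟨X ++ (b.map Prod.snd).reverse, L.unit (L.t h) :: b.map Prod.fst,
        by simp, ?_, ?_⟩
      · exact hRs.evals hX
      · have := hRf.evals (.single (L.unit (L.t h)))
        simpa using this

end Aux2

end LocalGroupoid

namespace LocalGroupoid

section Aux3

variable {G : Type*} {M : Type*} {L : LocalGroupoid G M}

theorem absorb_right {A post : List G} {k : G} (hA : L.EvalsTo A k)
    (hpost : post = [] ∨ L.EvalsTo post (L.unit (L.s k))) :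
    L.ContractsTo (A ++ post) A := by
  rcases hpost with rfl | hp
  · simpa [ContractsTo] using Relation.ReflTransGen.refl (r := L.Contr) (a := A)
  · obtain ⟨As, aL, rfl, hs⟩ := hA.exists_last
    have c1 : L.ContractsTo ((As ++ [aL]) ++ post) ((As ++ [aL]) ++ [L.unit (L.s k)]) := by
      have := contractsTo_ctx (As ++ [aL]) ([] : List G) hp.contractsTo
      simpa using this
    refine c1.tail ?_
    have h2 : L.Contr (As ++ aL :: L.unit (L.s aL) :: []) (As ++ L.mul aL (L.unit (L.s aL)) :: []) :=
      Contr.mk As [] (L.D_unit_right aL)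
    rw [L.mul_unit_right, hs] at h2
    simpa using h2

theorem absorb_left {A pre : List G} {k : G} (hA : L.EvalsTo A k)
    (hpre : pre = [] ∨ L.EvalsTo pre (L.unit (L.t k))) :
    L.ContractsTo (pre ++ A) A := by
  rcases hpre with rfl | hp
  · simpa [ContractsTo] using Relation.ReflTransGen.refl (r := L.Contr) (a := A)
  · obtain ⟨a1, As, rfl, ht⟩ := hA.exists_head
    have c1 : L.ContractsTo (pre ++ a1 :: As) ([L.unit (L.t k)] ++ a1 :: As) := by
      have := contractsTo_ctx ([] : List G) (a1 :: As) hp.contractsTo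
      simpa using this
    refine c1.tail ?_
    have h2 : L.Contr ([] ++ L.unit (L.t a1) :: a1 :: As) ([] ++ L.mul (L.unit (L.t a1)) a1 :: As) :=
      Contr.mk [] As (L.D_unit_left a1)
    rw [L.unit_mul, ht] at h2
    simpa using h2

theorem absorb {A pre post : List G} {k : G} (hA : L.EvalsTo A k)
    (hpre : pre = [] ∨ L.EvalsTo pre (L.unit (L.t k)))
    (hpost : post = [] ∨ L.EvalsTo post (L.unit (L.s k))) :
    L.ContractsTo (pre ++ A ++ post) A := by
  have c1 : L.ContractsTo (pre ++ (A ++ post)) (pre ++ A) := by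
    have := contractsTo_ctx pre ([] : List G) (absorb_right hA hpost)
    simpa using this
  have c2 := absorb_left hA hpre
  rw [← List.append_assoc] at c1
  exact c1.trans c2

theorem joinEval (hID : L.InvDecomp) : ∀ {B : List G} {k : G}, L.EvalsTo B k →
    ∀ {A : List G}, L.EvalsTo A k →
      ∃ Z, L.ContractsTo Z A ∧ L.ContractsTo Z B := by
  intro B k hB
  induction hB with
  | single k => intro A hA; exact ⟨A, .refl, hA.contractsTo⟩
  | @mul B1 B2 g' h' h1 h2 hD ih1 ih2 =>
    intro A hA
    obtain ⟨pre, post, hpre, hpost, hsplit⟩ := key hID hD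
    obtain ⟨Bg, Bh, heq, hBg, hBh⟩ := hsplit A hA
    obtain ⟨Zg, hZg1, hZg2⟩ := ih1 hBg
    obtain ⟨Zh, hZh1, hZh2⟩ := ih2 hBh
    refine ⟨Zg ++ Zh, ?_, contractsTo_append hZg2 hZh2⟩
    have c1 : L.ContractsTo (Zg ++ Zh) (Bg ++ Bh) := contractsTo_append hZg1 hZh1
    rw [← heq] at c1
    exact c1.trans (absorb hA hpre hpost)

theorem blocks_join (hID : L.InvDecomp) : ∀ {W v : List G}, Blocks L W v →
    ∀ {W' : List G}, Blocks L W' v →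
      ∃ Z, L.ContractsTo Z W ∧ L.ContractsTo Z W' := by
  intro W v hW
  induction hW with
  | nil =>
    intro W' hW'
    cases hW'
    exact ⟨[], .refl, .refl⟩
  | @cons B W2 k v hB hW2 ih =>
    intro W' hW'
    cases hW' with
    | cons hB' hrest' =>
      obtain ⟨Z1, z11, z12⟩ := joinEval hID hB hB'
      obtain ⟨Z2, z21, z22⟩ := ih hrest'
      exact ⟨Z1 ++ Z2, contractsTo_append z12 z21, contractsTo_append z11 z22⟩

theorem cc (hID : L.InvDecomp) {W W' v : List G} (h1 : L.ContractsTo W v)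
    (h2 : L.ContractsTo W' v) : ∃ Z, L.ContractsTo Z W ∧ L.ContractsTo Z W' :=
  blocks_join hID h1.blocks h2.blocks

theorem equiv_join (hID : L.InvDecomp) {u v : List G} (h : L.WordEquiv u v) :
    ∃ W, L.ContractsTo W u ∧ L.ContractsTo W v := by
  have h' : Relation.EqvGen L.Contr u v := h
  clear h
  induction h' with
  | rel a b hab => exact ⟨a, .refl, Relation.ReflTransGen.single hab⟩
  | refl a => exact ⟨a, .refl, .refl⟩
  | symm a b _ ih =>
    obtain ⟨W, h1, h2⟩ := ih
    exact ⟨W, h2, h1⟩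
  | trans a b c _ _ ih1 ih2 =>
    obtain ⟨W1, hW1a, hW1b⟩ := ih1
    obtain ⟨W2, hW2b, hW2c⟩ := ih2
    obtain ⟨Z, hZ1, hZ2⟩ := cc hID hW1b hW2b
    exact ⟨Z, hZ1.trans hW1a, hZ2.trans hW2c⟩

theorem ContractsTo.wordEquiv {a b : List G} (h : L.ContractsTo a b) :
    L.WordEquiv a b := by
  induction h with
  | refl => exact Relation.EqvGen.refl _
  | tail _ hst ih => exact Relation.EqvGen.trans _ _ _ ih (Relation.EqvGen.rel _ _ hst)

end Aux3

end LocalGroupoid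

/-- For a local groupoid with the inverse-decomposition property,
the kernel of the completion map `G → AC(G)` (arrows whose one-letter word is
equivalent to a unit word) is exactly the set of associators. -/
theorem kernel_eq_associators {G M : Type*} (L : LocalGroupoid G M)
    (hID : L.InvDecomp) (g : G) :
    (∃ y : M, L.WordEquiv [g] [L.unit y]) ↔ (∃ x : M, L.IsAssociator x g) := by
  constructor
  · rintro ⟨y, hy⟩
    obtain ⟨W, h1, h2⟩ := LocalGroupoid.equiv_join hID hy
    have e1 : L.EvalsTo W g := LocalGroupoid.blocks_single h1.blocks
    have e2 : L.EvalsTo W (L.unit y) := LocalGroupoid.blocks_single h2.blocks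
    obtain ⟨a, As, hW1, ht1⟩ := e1.exists_head
    obtain ⟨a', As', hW2, ht2⟩ := e2.exists_head
    obtain ⟨Bs, c, hW3, hs1⟩ := e1.exists_last
    obtain ⟨Bs', c', hW4, hs2⟩ := e2.exists_last
    have haa : a = a' := by
      rw [hW1] at hW2
      exact (List.cons.injEq _ _ _ _ ▸ hW2).1
    have hcc : c = c' := by
      have h5 : some c = some c' := by
        rw [← List.getLast?_concat (l := Bs), ← hW3, hW4, List.getLast?_concat]
      exact Option.some.inj h5
    have hty : L.t g = y := by
      rw [← ht1, haa, ht2, L.t_unit]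
    have hsy : L.s g = y := by
      rw [← hs1, hcc, hs2, L.s_unit]
    exact ⟨y, hsy, hty, W, e1.wf, h1, h2⟩
  · rintro ⟨x, hs, ht, w, hwf, h1, h2⟩
    exact ⟨x, Relation.EqvGen.trans _ _ _
      (Relation.EqvGen.symm _ _ h1.wordEquiv) h2.wordEquiv⟩
end

section
/- If a local groupoid G is globally associative (for every n ≥ 3 and every composable n-tuple, all defined n-fold products obtained by different bracketings are equal) and satisfies the inverse-decomposition property, then the completion map G → AC(G) is injective. Conversely, if the completion map G → AC(G) is injective then G is globally associative. -/
namespace LocalGroupoid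

section Aux

variable {G : Type*} {M : Type*} (L : LocalGroupoid G M)

/-! ### Basic lemmas about contractions -/

lemma contr_context {w w' : List G} (h : L.Contr w w') (p q : List G) :
    L.Contr (p ++ w ++ q) (p ++ w' ++ q) := by
  cases h with
  | mk p₀ q₀ hD =>
    have := Contr.mk (L := L) (p ++ p₀) (q₀ ++ q) hD
    simpa [List.append_assoc] using this

lemma contractsTo_context {w w' : List G} (h : L.ContractsTo w w') (p q : List G) :
    L.ContractsTo (p ++ w ++ q) (p ++ w' ++ q) := by
  induction h with
  | refl => exact Relation.ReflTransGen.refl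
  | tail _ step ih => exact ih.tail (L.contr_context step p q)

lemma contractsTo_append_s7 {a b c d : List G} (h1 : L.ContractsTo a b) (h2 : L.ContractsTo c d) :
    L.ContractsTo (a ++ c) (b ++ d) := by
  have h1' := L.contractsTo_context h1 [] c
  have h2' := L.contractsTo_context h2 b []
  simp only [List.nil_append, List.append_nil] at h1' h2'
  exact h1'.trans h2'

lemma contr_absorbL (p q : List G) (y : G) :
    L.Contr (p ++ L.unit (L.t y) :: y :: q) (p ++ y :: q) := by
  have := Contr.mk (L := L) p q (L.D_unit_left y)
  rwa [L.unit_mul] at this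

lemma contr_absorbL_eq (p q : List G) (y r : G) (e : r = L.unit (L.t y)) :
    L.Contr (p ++ r :: y :: q) (p ++ y :: q) := by
  subst e; exact L.contr_absorbL p q y

lemma contr_absorbR (p q : List G) (y : G) :
    L.Contr (p ++ y :: L.unit (L.s y) :: q) (p ++ y :: q) := by
  have := Contr.mk (L := L) p q (L.D_unit_right y)
  rwa [L.mul_unit_right] at this

/-! ### Evaluations -/

lemma evalsTo_ne_nil {w : List G} {x : G} (h : L.EvalsTo w x) : w ≠ [] := by
  induction h with
  | single g => simp
  | mul h1 h2 hD ih1 ih2 => simp [List.append_eq_nil_iff]; tauto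

lemma evalsTo_head_t {w : List G} {x : G} (h : L.EvalsTo w x) :
    w.head?.map L.t = some (L.t x) := by
  induction h with
  | single g => rfl
  | mul h1 h2 hD ih1 ih2 =>
    rw [List.head?_append_of_ne_nil _ (L.evalsTo_ne_nil h1), L.t_mul hD, ih1]

lemma evalsTo_getLast_s {w : List G} {x : G} (h : L.EvalsTo w x) :
    w.getLast?.map L.s = some (L.s x) := by
  induction h with
  | single g => rfl
  | @mul w1 w2 g h h1 h2 hD ih1 ih2 =>
    rw [List.getLast?_append, L.s_mul hD]
    cases e : w2.getLast? with
    | none => rw [e] at ih2; simp at ih2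
    | some y => rw [e] at ih2; simpa using ih2

lemma contr_head_t {w w' : List G} (h : L.Contr w w') :
    w.head?.map L.t = w'.head?.map L.t := by
  cases h with
  | mk p q hD =>
    cases p with
    | nil => simp [L.t_mul hD]
    | cons a p' => simp

lemma contr_getLast_s {w w' : List G} (h : L.Contr w w') :
    w.getLast?.map L.s = w'.getLast?.map L.s := by
  cases h with
  | @mk p q g h hD =>
    rcases List.eq_nil_or_concat q with rfl | ⟨q', y, rfl⟩
    · simp [List.getLast?_append, L.s_mul hD]
    · rw [List.concat_eq_append]
      have e1 : (g :: h :: (q' ++ [y])).getLast? = some y := by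
        rw [show g :: h :: (q' ++ [y]) = (g :: h :: q') ++ [y] by simp, List.getLast?_concat]
      have e2 : (L.mul g h :: (q' ++ [y])).getLast? = some y := by
        rw [show L.mul g h :: (q' ++ [y]) = (L.mul g h :: q') ++ [y] by simp, List.getLast?_concat]
      rw [List.getLast?_append, List.getLast?_append, e1, e2]

lemma contractsTo_head_t {w w' : List G} (h : L.ContractsTo w w') :
    w.head?.map L.t = w'.head?.map L.t := by
  induction h with
  | refl => rfl
  | tail _ step ih => rw [ih, L.contr_head_t step]

lemma contractsTo_getLast_s {w w' : List G} (h : L.ContractsTo w w') :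
    w.getLast?.map L.s = w'.getLast?.map L.s := by
  induction h with
  | refl => rfl
  | tail _ step ih => rw [ih, L.contr_getLast_s step]

lemma exists_head_of_contr_unit {W : List G} {τ : M} (h : L.ContractsTo W [L.unit τ]) :
    ∃ r rest, W = r :: rest ∧ L.t r = τ := by
  have h2 := L.contractsTo_head_t h
  cases W with
  | nil => simp at h2
  | cons r rest =>
    refine ⟨r, rest, rfl, ?_⟩
    simpa [L.t_unit] using h2

lemma exists_last_of_contr_unit {W : List G} {σ : M} (h : L.ContractsTo W [L.unit σ]) :
    ∃ init y, W = init ++ [y] ∧ L.s y = σ := by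
  have h2 := L.contractsTo_getLast_s h
  rcases List.eq_nil_or_concat W with rfl | ⟨init, y, rfl⟩
  · simp at h2
  · refine ⟨init, y, by simp [List.concat_eq_append], ?_⟩
    simpa [List.concat_eq_append, List.getLast?_append, L.s_unit] using h2

/-- Kill an auxiliary word that contracts to a unit, absorbing it into the letter on its right. -/
lemma kill_left {W : List G} {τ : M} (hW : L.ContractsTo W [L.unit τ]) (r : G)
    (ht : L.t r = τ) (p rest : List G) :
    L.ContractsTo (p ++ W ++ r :: rest) (p ++ r :: rest) := by
  have h1 := L.contractsTo_context hW p (r :: rest)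
  have h2 := L.contr_absorbL p rest r
  rw [ht] at h2
  exact h1.tail (by simpa [List.append_assoc] using h2)

/-- Kill an auxiliary word that contracts to a unit, absorbing it into the letter on its left. -/
lemma kill_right {W : List G} {σ : M} (hW : L.ContractsTo W [L.unit σ]) (y : G)
    (hs : L.s y = σ) (p q : List G) :
    L.ContractsTo (p ++ y :: (W ++ q)) (p ++ y :: q) := by
  have h1 := L.contractsTo_context hW (p ++ [y]) q
  have h2 := L.contr_absorbR p q y
  rw [hs] at h2
  exact (by simpa [List.append_assoc] using h1 :
    L.ContractsTo (p ++ y :: (W ++ q)) (p ++ y :: L.unit σ :: q)).tail h2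

lemma evalsTo_contractsTo {w : List G} {x : G} (h : L.EvalsTo w x) :
    L.ContractsTo w [x] := by
  induction h with
  | single g => exact Relation.ReflTransGen.refl
  | mul h1 h2 hD ih1 ih2 =>
    have h3 : L.ContractsTo (_ ++ _) ([_] ++ [_]) := L.contractsTo_append_s7 ih1 ih2
    exact h3.tail (by simpa using Contr.mk (L := L) [] [] hD)

lemma append_eq_append_cons {w₁ w₂ p q : List G} {z : G} (h : w₁ ++ w₂ = p ++ z :: q) :
    (∃ q₁, w₁ = p ++ z :: q₁ ∧ q = q₁ ++ w₂) ∨ (∃ p₂, w₂ = p₂ ++ z :: q ∧ p = w₁ ++ p₂) := by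
  rcases List.append_eq_append_iff.mp h with ⟨a', h1, h2⟩ | ⟨c', h1, h2⟩
  · exact Or.inr ⟨a', h2, h1⟩
  · cases c' with
    | nil =>
      exact Or.inr ⟨[], by simpa using h2.symm, by simpa using h1.symm⟩
    | cons z' c'' =>
      have h2' : z = z' ∧ q = c'' ++ w₂ := by simpa using h2
      obtain ⟨rfl, hq⟩ := h2'
      exact Or.inl ⟨c'', h1, hq⟩

lemma evalsTo_subst {z : G} {wz : List G} (hz : L.EvalsTo wz z) :
    ∀ {W} {x : G}, L.EvalsTo W x → ∀ {p q : List G}, W = p ++ z :: q →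
      L.EvalsTo (p ++ wz ++ q) x := by
  intro W x h
  induction h with
  | single g =>
    intro p q hpq
    cases p with
    | nil =>
      obtain ⟨rfl, rfl⟩ : g = z ∧ q = [] := by simpa using hpq
      simpa using hz
    | cons a p' =>
      exfalso
      have h2 := congrArg List.length hpq
      simp only [List.length_cons, List.length_append, List.length_nil] at h2
      omega
  | mul h1 h2 hD ih1 ih2 =>
    intro p q hpq
    rcases append_eq_append_cons hpq with ⟨q₁, rfl, rfl⟩ | ⟨p₂, rfl, rfl⟩
    · have := EvalsTo.mul (ih1 rfl) h2 hD
      simpa [List.append_assoc] using this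
    · have := EvalsTo.mul h1 (ih2 rfl) hD
      simpa [List.append_assoc] using this

lemma evalsTo_of_contractsTo_single {W : List G} {x : G} (h : L.ContractsTo W [x]) :
    L.EvalsTo W x := by
  induction h using Relation.ReflTransGen.head_induction_on with
  | refl => exact EvalsTo.single x
  | head step _ ih =>
    cases step with
    | mk p q hD =>
      have := L.evalsTo_subst (EvalsTo.mul (.single _) (.single _) hD) ih rfl
      simpa using this

/-! ### LProd / RProd lemmas -/

lemma lprod_nil {g r : G} (h : L.LProd [] g r) : r = g := by cases h; rfl

lemma rprod_nil {g r : G} (h : L.RProd g [] r) : r = g := by cases h; rfl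

lemma lprod_evalsTo {as : List G} {seed r : G} (h : L.LProd as seed r) :
    L.EvalsTo (as ++ [seed]) r := by
  induction h with
  | nil g => exact EvalsTo.single g
  | cons a h hD ih =>
    have := EvalsTo.mul (EvalsTo.single a) ih hD
    simpa using this

lemma lprod_append {l₁ l₂ : List G} {seed r : G} (h : L.LProd (l₁ ++ l₂) seed r) :
    ∃ m, L.LProd l₂ seed m ∧ L.LProd l₁ m r := by
  induction l₁ generalizing r with
  | nil => exact ⟨r, h, LProd.nil r⟩
  | cons a l₁ ih =>
    cases h with
    | cons _ h hD =>
      obtain ⟨m, h2, h1⟩ := ih h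
      exact ⟨m, h2, LProd.cons a h1 hD⟩

lemma lprod_s {as : List G} {seed r : G} (h : L.LProd as seed r) : L.s r = L.s seed := by
  induction h with
  | nil g => rfl
  | cons a h hD ih => rw [L.s_mul hD, ih]

lemma lprod_cons_t {y : G} {l : List G} {x v : G} (h : L.LProd (y :: l) x v) :
    L.t v = L.t y := by
  cases h with
  | cons _ h hD => exact L.t_mul hD

lemma lprod_unit_evalsTo {as : List G} {c : M} {r : G} (h : L.LProd as (L.unit c) r)
    (hne : as ≠ []) : L.EvalsTo as r := by
  rcases List.eq_nil_or_concat as with rfl | ⟨as', y, rfl⟩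
  · exact absurd rfl hne
  · rw [List.concat_eq_append] at h ⊢
    obtain ⟨m, h2, h1⟩ := L.lprod_append h
    cases h2 with
    | cons _ h2' hD =>
      have h2'' := L.lprod_nil h2'
      subst h2''
      have hs : L.s y = c := by
        have := L.D_st hD; rwa [L.t_unit] at this
      have hm : L.mul y (L.unit c) = y := by
        rw [← hs]; exact L.mul_unit_right y
      rw [hm] at h1
      exact L.lprod_evalsTo h1

lemma rprod_evalsTo {seed : G} {bs : List G} {r : G} (h : L.RProd seed bs r) :
    L.EvalsTo (seed :: bs) r := by
  induction h with
  | nil g => exact EvalsTo.single g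
  | @cons bs g r' b hD h ih =>
    have := L.evalsTo_subst (EvalsTo.mul (.single g) (.single b) hD) ih
      (p := []) (q := bs) rfl
    simpa using this

lemma rprod_append {l₁ l₂ : List G} {seed r : G} (h : L.RProd seed (l₁ ++ l₂) r) :
    ∃ m, L.RProd seed l₁ m ∧ L.RProd m l₂ r := by
  induction l₁ generalizing seed with
  | nil => exact ⟨seed, RProd.nil seed, h⟩
  | cons b l₁ ih =>
    cases h with
    | cons _ hD h =>
      obtain ⟨m, h1, h2⟩ := ih h
      exact ⟨m, RProd.cons b hD h1, h2⟩

lemma rprod_t {seed : G} {bs : List G} {r : G} (h : L.RProd seed bs r) :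
    L.t r = L.t seed := by
  induction h with
  | nil g => rfl
  | cons b hD h ih => rw [ih, L.t_mul hD]

lemma rprod_unit_cons_t {c : M} {y : G} {l : List G} {r : G}
    (h : L.RProd (L.unit c) (y :: l) r) : L.t y = c := by
  cases h with
  | cons _ hD h =>
    have := L.D_st hD
    rw [L.s_unit] at this
    exact this.symm

lemma rprod_unit_evalsTo {c : M} {bs : List G} {r : G} (h : L.RProd (L.unit c) bs r)
    (hne : bs ≠ []) : L.EvalsTo bs r := by
  cases bs with
  | nil => exact absurd rfl hne
  | cons b bs' =>
    cases h with
    | cons _ hD h =>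
      have ht : L.t b = c := by
        have := L.D_st hD
        rw [L.s_unit] at this
        exact this.symm
      have hm : L.mul (L.unit c) b = b := by rw [← ht]; exact L.unit_mul b
      rw [hm] at h
      exact L.rprod_evalsTo h

/-! ### Zipper cancellation of telescopes of inverse pairs -/

lemma zip_left : ∀ (a : List (G × G)), a ≠ [] → (∀ p ∈ a, L.InvPair p.1 p.2) →
    ∀ seed x u v, L.LProd (a.map Prod.fst).reverse seed u → L.LProd (a.map Prod.snd) x v →
    L.EvalsTo ((a.map Prod.fst).reverse ++ a.map Prod.snd) (L.unit (L.t u)) := by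
  intro a
  induction a using List.reverseRecOn with
  | nil => intro h; exact absurd rfl h
  | append_singleton as fs ih =>
    intro _ hinv seed x u v hu hv
    obtain ⟨f, s⟩ := fs
    have hfs : L.InvPair f s := hinv (f, s) (by simp)
    rw [List.map_append, List.reverse_append] at hu
    rw [List.map_append] at hv
    simp only [List.map_cons, List.map_nil, List.reverse_cons, List.reverse_nil,
      List.nil_append, List.cons_append] at hu hv
    -- hu : LProd (f :: (as.map fst).reverse) seed u
    -- hv : LProd ((as.map snd) ++ [s]) x v
    cases hu with
    | @cons _ _ u' _ hu' hDfu =>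
      obtain ⟨m, hm, hv'⟩ := L.lprod_append hv
      cases hm with
      | @cons _ _ xm _ hm' hDsx =>
        -- hv' : LProd (as.map snd) (mul s xm) v, hDsx : D s xm
        rw [List.map_append, List.map_append, List.reverse_append]
        simp only [List.map_cons, List.map_nil, List.reverse_cons, List.reverse_nil,
          List.nil_append, List.cons_append]
        rcases List.eq_nil_or_concat as with rfl | ⟨as₂, qp, hconcat⟩
        · -- base : single pair
          simp only [List.map_nil, List.reverse_nil, List.nil_append]
          have e := EvalsTo.mul (L := L) (.single f) (.single s) hfs.1
          have hval : L.mul f s = L.unit (L.t (L.mul f u')) := by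
            rw [hfs.2.2.1, L.t_mul hDfu]
          rwa [hval] at e
        · -- inductive step
          rw [List.concat_eq_append] at hconcat
          subst hconcat
          have hne : as₂ ++ [qp] ≠ [] := by simp
          have ihres := ih hne (fun p hp => hinv p (List.mem_append_left _ hp))
            seed (L.mul s xm) u' v hu' hv'
          have hqp : L.InvPair qp.1 qp.2 := hinv qp (by simp)
          have hts : L.t s = L.t qp.1 := by
            have hv'' := hv'
            rw [List.map_append] at hv''
            simp only [List.map_cons, List.map_nil] at hv''
            obtain ⟨m₂, hm₂, _⟩ := L.lprod_append hv''
            have hDq2 : L.D qp.2 (L.mul s xm) := by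
              cases hm₂ with
              | cons _ h0 hD0 => rwa [L.lprod_nil h0] at hD0
            have h1 := L.D_st hDq2
            rw [L.t_mul hDsx] at h1
            have h2 := L.D_st hqp.2.1
            rw [h1] at h2; exact h2
          have htu' : L.t u' = L.t qp.1 := by
            have hu'' := hu'
            rw [List.map_append] at hu''
            simp only [List.map_cons, List.map_nil, List.reverse_append, List.reverse_cons,
              List.reverse_nil, List.nil_append, List.cons_append] at hu''
            cases hu'' with
            | cons _ h0 hD0 => exact L.t_mul hD0
          have e2 := EvalsTo.mul (L := L) ihres (.single s)
            (by rw [htu', ← hts]; exact L.D_unit_left s)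
          have hval2 : L.mul (L.unit (L.t u')) s = s := by
            rw [htu', ← hts]; exact L.unit_mul s
          rw [hval2] at e2
          have e3 := EvalsTo.mul (L := L) (.single f) e2 hfs.1
          have hval3 : L.mul f s = L.unit (L.t (L.mul f u')) := by
            rw [hfs.2.2.1, L.t_mul hDfu]
          rw [hval3] at e3
          simpa [List.append_assoc] using e3

lemma zip_right : ∀ (b : List (G × G)), b ≠ [] → (∀ p ∈ b, L.InvPair p.1 p.2) →
    ∀ x u v, L.RProd (L.unit (L.t v)) (b.map Prod.fst) v → L.RProd x (b.map Prod.snd).reverse u →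
    L.EvalsTo ((b.map Prod.snd).reverse ++ b.map Prod.fst) (L.unit (L.s v)) := by
  intro b
  induction b using List.reverseRecOn with
  | nil => intro h; exact absurd rfl h
  | append_singleton bs pq ih =>
    intro _ hinv x u v h1 h2
    obtain ⟨bb, b'⟩ := pq
    have hbb : L.InvPair bb b' := hinv (bb, b') (by simp)
    rw [List.map_append] at h1
    rw [List.map_append, List.reverse_append] at h2
    simp only [List.map_cons, List.map_nil, List.reverse_cons, List.reverse_nil,
      List.nil_append, List.cons_append] at h1 h2
    -- h1 : RProd (unit (t v)) ((bs.map fst) ++ [bb]) v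
    -- h2 : RProd x (b' :: (bs.map snd).reverse) u
    cases h2 with
    | cons _ hDxb' h2' =>
      obtain ⟨m, h1a, h1b⟩ := L.rprod_append h1
      cases h1b with
      | cons _ hDmb h0 =>
        have hv : v = L.mul m bb := L.rprod_nil h0
        rw [List.map_append, List.map_append, List.reverse_append]
        simp only [List.map_cons, List.map_nil, List.reverse_cons, List.reverse_nil,
          List.nil_append, List.cons_append]
        rcases List.eq_nil_or_concat bs with rfl | ⟨bs₂, qp, hconcat⟩
        · -- base
          have hm := L.rprod_nil h1a
          subst hm
          simp only [List.map_nil, List.reverse_nil, List.nil_append]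
          have e := EvalsTo.mul (L := L) (.single b') (.single bb) hbb.2.1
          have hval : L.mul b' bb = L.unit (L.s v) := by
            rw [hbb.2.2.2, hv, L.s_mul hDmb]
          rwa [hval] at e
        · -- step
          rw [List.concat_eq_append] at hconcat
          subst hconcat
          have hne : bs₂ ++ [qp] ≠ [] := by simp
          have htm : L.t m = L.t v := by
            have := L.rprod_t h1a
            rwa [L.t_unit] at this
          have h1a' : L.RProd (L.unit (L.t m)) ((bs₂ ++ [qp]).map Prod.fst) m := by
            rwa [htm]
          have ihres := ih hne (fun p hp => hinv p (List.mem_append_left _ hp)) (L.mul x b') u m h1a' h2'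
          have hqp : L.InvPair qp.1 qp.2 := hinv qp (by simp)
          have hsb' : L.s b' = L.s m := by
            have h2'' := h2'
            rw [List.map_append] at h2''
            simp only [List.map_cons, List.map_nil, List.reverse_append, List.reverse_cons,
              List.reverse_nil, List.nil_append, List.cons_append] at h2''
            have e1 : L.s b' = L.t qp.2 := by
              cases h2'' with
              | cons _ hD0 h0' =>
                have := L.D_st hD0; rwa [L.s_mul hDxb'] at this
            have h1a'' := h1a
            rw [List.map_append] at h1a''
            simp only [List.map_cons, List.map_nil] at h1a''
            obtain ⟨m₃, _, h1a2⟩ := L.rprod_append h1a''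
            have e2 : L.s m = L.s qp.1 := by
              cases h1a2 with
              | cons _ hD0 h0' =>
                rw [L.rprod_nil h0']; exact L.s_mul hD0
            have e3 : L.s qp.1 = L.t qp.2 := L.D_st hqp.1
            rw [e1, ← e3, ← e2]
          have e1 := EvalsTo.mul (L := L) (.single b') ihres
            (by rw [← hsb']; exact L.D_unit_right b')
          have hval1 : L.mul b' (L.unit (L.s m)) = b' := by
            rw [← hsb']; exact L.mul_unit_right b'
          rw [hval1] at e1
          have e2 := EvalsTo.mul (L := L) e1 (.single bb) hbb.2.1
          have hval2 : L.mul b' bb = L.unit (L.s v) := by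
            rw [hbb.2.2.2, hv, L.s_mul hDmb]
          rw [hval2] at e2
          simpa [List.append_assoc] using e2

/-! ### The key wedge lemma -/

lemma key_s7 (hID : L.InvDecomp) {B : List G} {x : G} (hB : L.EvalsTo B x) :
    ∃ P S, L.ContractsTo P [L.unit (L.t x)] ∧ L.ContractsTo S [L.unit (L.s x)] ∧
      L.ContractsTo (P ++ x :: S) B := by
  induction hB with
  | single g =>
    refine ⟨[L.unit (L.t g)], [L.unit (L.s g)], .refl, .refl, ?_⟩
    have s1 : L.Contr [L.unit (L.t g), g, L.unit (L.s g)] [g, L.unit (L.s g)] := by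
      simpa using L.contr_absorbL [] [L.unit (L.s g)] g
    have s2 : L.Contr [g, L.unit (L.s g)] [g] := by
      simpa using L.contr_absorbR [] [] g
    exact (Relation.ReflTransGen.single s1).tail s2
  | @mul B₁ B₂ u v h1 h2 hD ih1 ih2 =>
    obtain ⟨P₁, S₁, hP₁, hS₁, hw₁⟩ := ih1
    obtain ⟨P₂, S₂, hP₂, hS₂, hw₂⟩ := ih2
    have hst : L.s u = L.t v := L.D_st hD
    rcases hID u v hD with ⟨a, hinv, hLg, hLh⟩ | ⟨b, hinv, hRh, hRg⟩
    · rcases eq_or_ne a [] with rfl | ha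
      · -- left decomposition, empty list : u is a unit
        have hu : u = L.unit (L.s u) := L.lprod_nil hLg
        have hv : v = L.mul u v := L.lprod_nil hLh
        have htu : L.t u = L.s u := by
          conv_lhs => rw [hu]; exact L.t_unit _
        obtain ⟨r, rest, hP₂e, htr⟩ := L.exists_head_of_contr_unit hP₂
        subst hP₂e
        refine ⟨P₁ ++ u :: (S₁ ++ r :: rest), S₂, ?_, ?_, ?_⟩
        · rw [L.t_mul hD]
          have k1 : L.ContractsTo (P₁ ++ u :: (S₁ ++ r :: rest)) (P₁ ++ u :: r :: rest) := by
            have := L.kill_left hS₁ r (by rw [htr, ← hst]) (P₁ ++ [u]) rest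
            simpa [List.append_assoc] using this
          have k2 : L.ContractsTo (P₁ ++ u :: r :: rest) (P₁ ++ [u]) := by
            have := L.kill_right hP₂ u hst P₁ []
            simpa [List.append_assoc] using this
          have k3 : L.ContractsTo (P₁ ++ [u]) [u] := by
            have := L.kill_left hP₁ u rfl [] []
            simpa using this
          have goal_eq : L.unit (L.t u) = u := by rw [htu, ← hu]
          rw [show [L.unit (L.t u)] = [u] from by rw [goal_eq]]
          exact k1.trans (k2.trans k3)
        · rw [L.s_mul hD]; exact hS₂
        · have c1 : L.ContractsTo (P₁ ++ u :: (S₁ ++ r :: (rest ++ v :: S₂)))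
              (P₁ ++ u :: (S₁ ++ B₂)) := by
            have := L.contractsTo_context hw₂ (P₁ ++ u :: S₁) []
            simpa [List.append_assoc] using this
          have c2 : L.ContractsTo (P₁ ++ u :: (S₁ ++ B₂)) (B₁ ++ B₂) := by
            have := L.contractsTo_append_s7 hw₁ (Relation.ReflTransGen.refl (a := B₂))
            simpa [List.append_assoc] using this
          have goal_shape : (P₁ ++ u :: (S₁ ++ r :: rest)) ++ L.mul u v :: S₂
              = P₁ ++ u :: (S₁ ++ r :: (rest ++ v :: S₂)) := by
            rw [← hv]; simp [List.append_assoc]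
          rw [goal_shape]
          exact c1.trans c2
      · -- left decomposition, nonempty telescope
        obtain ⟨p₀, a', rfl⟩ := List.exists_cons_of_ne_nil ha
        have hFu : L.EvalsTo ((p₀ :: a').map Prod.fst).reverse u :=
          L.lprod_unit_evalsTo hLg (by simp)
        have hSv : L.EvalsTo (p₀.2 :: (a'.map Prod.snd ++ [L.mul u v])) v := by
          have := L.lprod_evalsTo hLh
          simpa using this
        have hz : L.EvalsTo (((p₀ :: a').map Prod.fst).reverse ++ p₀.2 :: a'.map Prod.snd)
            (L.unit (L.t u)) := by
          have := L.zip_left (p₀ :: a') (by simp) hinv _ _ _ _ hLg hLh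
          simpa using this
        have htv : L.t v = L.t p₀.2 := L.lprod_cons_t hLh
        obtain ⟨r, rest, hP₂e, htr⟩ := L.exists_head_of_contr_unit hP₂
        subst hP₂e
        set Fw := ((p₀ :: a').map Prod.fst).reverse with hFwdef
        set Sw' := a'.map Prod.snd with hSwdef
        refine ⟨P₁ ++ (Fw ++ (S₁ ++ (r :: (rest ++ p₀.2 :: Sw')))), S₂, ?_, ?_, ?_⟩
        · rw [L.t_mul hD]
          have k1 : L.ContractsTo (P₁ ++ (Fw ++ (S₁ ++ (r :: (rest ++ p₀.2 :: Sw')))))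
              (P₁ ++ (Fw ++ (r :: (rest ++ p₀.2 :: Sw')))) := by
            have := L.kill_left hS₁ r (by rw [htr, ← hst]) (P₁ ++ Fw) (rest ++ p₀.2 :: Sw')
            simpa [List.append_assoc] using this
          have k2 : L.ContractsTo (P₁ ++ (Fw ++ (r :: (rest ++ p₀.2 :: Sw'))))
              (P₁ ++ (Fw ++ p₀.2 :: Sw')) := by
            have := L.kill_left hP₂ p₀.2 htv.symm (P₁ ++ Fw) Sw'
            simpa [List.append_assoc] using this
          have k3 : L.ContractsTo (P₁ ++ (Fw ++ p₀.2 :: Sw')) (P₁ ++ [L.unit (L.t u)]) := by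
            have := L.contractsTo_context (L.evalsTo_contractsTo hz) P₁ []
            simpa [List.append_assoc] using this
          have k4 : L.ContractsTo (P₁ ++ [L.unit (L.t u)]) [L.unit (L.t u)] := by
            have := L.kill_left hP₁ (L.unit (L.t u)) (L.t_unit _) [] []
            simpa using this
          exact k1.trans (k2.trans (k3.trans k4))
        · rw [L.s_mul hD]; exact hS₂
        · have c1 : L.ContractsTo
              (P₁ ++ (Fw ++ (S₁ ++ (r :: (rest ++ p₀.2 :: (Sw' ++ L.mul u v :: S₂))))))
              (P₁ ++ (Fw ++ (S₁ ++ (r :: (rest ++ v :: S₂))))) := by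
            have := L.contractsTo_context (L.evalsTo_contractsTo hSv)
              (P₁ ++ (Fw ++ (S₁ ++ (r :: rest)))) S₂
            simpa [List.append_assoc] using this
          have c2 : L.ContractsTo (P₁ ++ (Fw ++ (S₁ ++ (r :: (rest ++ v :: S₂)))))
              (P₁ ++ (Fw ++ (S₁ ++ B₂))) := by
            have := L.contractsTo_context hw₂ (P₁ ++ (Fw ++ S₁)) []
            simpa [List.append_assoc] using this
          have c3 : L.ContractsTo (P₁ ++ (Fw ++ (S₁ ++ B₂))) (P₁ ++ u :: (S₁ ++ B₂)) := by
            have := L.contractsTo_context (L.evalsTo_contractsTo hFu) P₁ (S₁ ++ B₂)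
            simpa [List.append_assoc] using this
          have c4 : L.ContractsTo (P₁ ++ u :: (S₁ ++ B₂)) (B₁ ++ B₂) := by
            have := L.contractsTo_append_s7 hw₁ (Relation.ReflTransGen.refl (a := B₂))
            simpa [List.append_assoc] using this
          have goal_shape : (P₁ ++ (Fw ++ (S₁ ++ (r :: (rest ++ p₀.2 :: Sw'))))) ++ L.mul u v :: S₂
              = P₁ ++ (Fw ++ (S₁ ++ (r :: (rest ++ p₀.2 :: (Sw' ++ L.mul u v :: S₂))))) := by
            simp [List.append_assoc]
          rw [goal_shape]
          exact c1.trans (c2.trans (c3.trans c4))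
    · rcases eq_or_ne b [] with rfl | hb
      · -- right decomposition, empty list : v is a unit
        have hv : v = L.unit (L.t v) := L.rprod_nil hRh
        have hu : u = L.mul u v := L.rprod_nil hRg
        have hsv : L.s v = L.t v := by
          conv_lhs => rw [hv]; exact L.s_unit _
        obtain ⟨r, rest, hP₂e, htr⟩ := L.exists_head_of_contr_unit hP₂
        subst hP₂e
        obtain ⟨r₂, rest₂, hS₂e, htr₂⟩ := L.exists_head_of_contr_unit hS₂
        subst hS₂e
        refine ⟨P₁, S₁ ++ (r :: (rest ++ v :: r₂ :: rest₂)), ?_, ?_, ?_⟩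
        · rw [L.t_mul hD]; exact hP₁
        · rw [L.s_mul hD]
          have k1 : L.ContractsTo (S₁ ++ (r :: (rest ++ v :: r₂ :: rest₂)))
              (r :: (rest ++ v :: r₂ :: rest₂)) := by
            have := L.kill_left hS₁ r (by rw [htr, ← hst]) [] (rest ++ v :: r₂ :: rest₂)
            simpa [List.append_assoc] using this
          have k2 : L.ContractsTo (r :: (rest ++ v :: r₂ :: rest₂)) (v :: r₂ :: rest₂) := by
            have := L.kill_left hP₂ v rfl [] (r₂ :: rest₂)
            simpa [List.append_assoc] using this
          have k3 : L.Contr (v :: r₂ :: rest₂) (r₂ :: rest₂) := by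
            have e : v = L.unit (L.t r₂) := by rw [htr₂, hsv, ← hv]
            simpa using L.contr_absorbL_eq [] rest₂ r₂ v e
          exact k1.trans (k2.trans (Relation.ReflTransGen.head k3 hS₂))
        · have goal_shape : P₁ ++ L.mul u v :: (S₁ ++ (r :: (rest ++ v :: r₂ :: rest₂)))
              = (P₁ ++ u :: S₁) ++ ((r :: rest) ++ v :: r₂ :: rest₂) := by
            rw [← hu]; simp [List.append_assoc]
          rw [goal_shape]
          exact L.contractsTo_append_s7 hw₁ hw₂
      · -- right decomposition, nonempty telescope
        obtain ⟨q₀, b', rfl⟩ := List.exists_cons_of_ne_nil hb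
        have hBv : L.EvalsTo (q₀.1 :: b'.map Prod.fst) v := by
          have := L.rprod_unit_evalsTo hRh (by simp)
          simpa using this
        have hxu : L.EvalsTo (L.mul u v :: ((q₀ :: b').map Prod.snd).reverse) u :=
          L.rprod_evalsTo hRg
        have hz : L.EvalsTo (((q₀ :: b').map Prod.snd).reverse ++ q₀.1 :: b'.map Prod.fst)
            (L.unit (L.s v)) := by
          have := L.zip_right (q₀ :: b') (by simp) hinv _ _ _ hRh hRg
          simpa using this
        have htq : L.t q₀.1 = L.t v := L.rprod_unit_cons_t hRh
        obtain ⟨r, rest, hP₂e, htr⟩ := L.exists_head_of_contr_unit hP₂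
        subst hP₂e
        obtain ⟨r₂, rest₂, hS₂e, htr₂⟩ := L.exists_head_of_contr_unit hS₂
        subst hS₂e
        set Bw' := ((q₀ :: b').map Prod.snd).reverse with hBwdef
        set Mf := b'.map Prod.fst with hMfdef
        refine ⟨P₁, Bw' ++ (S₁ ++ (r :: (rest ++ q₀.1 :: (Mf ++ r₂ :: rest₂)))), ?_, ?_, ?_⟩
        · rw [L.t_mul hD]; exact hP₁
        · rw [L.s_mul hD]
          have k1 : L.ContractsTo (Bw' ++ (S₁ ++ (r :: (rest ++ q₀.1 :: (Mf ++ r₂ :: rest₂)))))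
              (Bw' ++ (r :: (rest ++ q₀.1 :: (Mf ++ r₂ :: rest₂)))) := by
            have := L.kill_left hS₁ r (by rw [htr, ← hst]) Bw'
              (rest ++ q₀.1 :: (Mf ++ r₂ :: rest₂))
            simpa [List.append_assoc] using this
          have k2 : L.ContractsTo (Bw' ++ (r :: (rest ++ q₀.1 :: (Mf ++ r₂ :: rest₂))))
              (Bw' ++ (q₀.1 :: (Mf ++ r₂ :: rest₂))) := by
            have := L.kill_left hP₂ q₀.1 htq Bw' (Mf ++ r₂ :: rest₂)
            simpa [List.append_assoc] using this
          have k3 : L.ContractsTo (Bw' ++ (q₀.1 :: (Mf ++ r₂ :: rest₂)))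
              (L.unit (L.s v) :: r₂ :: rest₂) := by
            have := L.contractsTo_context (L.evalsTo_contractsTo hz) [] (r₂ :: rest₂)
            simpa [List.append_assoc] using this
          have k4 : L.Contr (L.unit (L.s v) :: r₂ :: rest₂) (r₂ :: rest₂) := by
            have e : L.unit (L.s v) = L.unit (L.t r₂) := by rw [htr₂]
            simpa using L.contr_absorbL_eq [] rest₂ r₂ _ e
          exact k1.trans (k2.trans (k3.trans (Relation.ReflTransGen.head k4 hS₂)))
        · have c0 : L.ContractsTo
              (P₁ ++ L.mul u v :: (Bw' ++ (S₁ ++ (r :: (rest ++ q₀.1 :: (Mf ++ r₂ :: rest₂))))))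
              (P₁ ++ u :: (S₁ ++ (r :: (rest ++ q₀.1 :: (Mf ++ r₂ :: rest₂))))) := by
            have := L.contractsTo_context (L.evalsTo_contractsTo hxu) P₁
              (S₁ ++ (r :: (rest ++ q₀.1 :: (Mf ++ r₂ :: rest₂))))
            simpa [List.append_assoc] using this
          have c1 : L.ContractsTo
              (P₁ ++ u :: (S₁ ++ (r :: (rest ++ q₀.1 :: (Mf ++ r₂ :: rest₂)))))
              (P₁ ++ u :: (S₁ ++ (r :: (rest ++ v :: r₂ :: rest₂)))) := by
            have := L.contractsTo_context (L.evalsTo_contractsTo hBv)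
              (P₁ ++ u :: (S₁ ++ (r :: rest))) (r₂ :: rest₂)
            simpa [List.append_assoc] using this
          have c2 : L.ContractsTo (P₁ ++ u :: (S₁ ++ (r :: (rest ++ v :: r₂ :: rest₂))))
              (B₁ ++ B₂) := by
            have := L.contractsTo_append_s7 hw₁ hw₂
            simpa [List.append_assoc] using this
          exact c0.trans (c1.trans c2)

/-! ### Common ancestors -/

lemma merge (hID : L.InvDecomp) {A C : List G} {x : G}
    (hA : L.EvalsTo A x) (hC : L.EvalsTo C x) :
    ∃ Z, L.ContractsTo Z A ∧ L.ContractsTo Z C := by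
  obtain ⟨Pa, Sa, hPa, hSa, ha⟩ := L.key_s7 hID hA
  obtain ⟨Pc, Sc, hPc, hSc, hc⟩ := L.key_s7 hID hC
  obtain ⟨r, rest, hPce, htr⟩ := L.exists_head_of_contr_unit hPc
  subst hPce
  obtain ⟨init, y, hSce, hsy⟩ := L.exists_last_of_contr_unit hSc
  subst hSce
  refine ⟨Pa ++ ((r :: rest) ++ x :: ((init ++ [y]) ++ Sa)), ?_, ?_⟩
  · -- contract to A : kill Pc (into x), kill Sc (after x), then ha
    have k1 : L.ContractsTo (Pa ++ ((r :: rest) ++ x :: ((init ++ [y]) ++ Sa)))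
        (Pa ++ x :: ((init ++ [y]) ++ Sa)) := by
      have := L.kill_left hPc x rfl Pa ((init ++ [y]) ++ Sa)
      simpa [List.append_assoc] using this
    have k2 : L.ContractsTo (Pa ++ x :: ((init ++ [y]) ++ Sa)) (Pa ++ x :: Sa) := by
      have := L.kill_right hSc x rfl Pa Sa
      simpa [List.append_assoc] using this
    exact k1.trans (k2.trans ha)
  · -- contract to C : kill Pa (into r), kill Sa (after y), then hc
    have k1 : L.ContractsTo (Pa ++ ((r :: rest) ++ x :: ((init ++ [y]) ++ Sa)))
        ((r :: rest) ++ x :: ((init ++ [y]) ++ Sa)) := by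
      have := L.kill_left hPa r htr [] (rest ++ x :: ((init ++ [y]) ++ Sa))
      simpa [List.append_assoc] using this
    have k2 : L.ContractsTo ((r :: rest) ++ x :: ((init ++ [y]) ++ Sa))
        ((r :: rest) ++ x :: (init ++ [y])) := by
      have := L.kill_right hSa y hsy ((r :: rest) ++ x :: init) []
      simpa [List.append_assoc] using this
    exact k1.trans (k2.trans hc)

lemma contractsTo_nil {Z : List G} (h : L.ContractsTo Z []) : Z = [] := by
  induction h using Relation.ReflTransGen.head_induction_on with
  | refl => rfl
  | head step _ ih =>
    cases step with
    | mk p q hD => exact absurd ih (by simp)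

lemma contractsTo_split : ∀ {Z W : List G}, L.ContractsTo Z W → ∀ {w₁ w₂ : List G},
    W = w₁ ++ w₂ → ∃ Z₁ Z₂, Z = Z₁ ++ Z₂ ∧ L.ContractsTo Z₁ w₁ ∧ L.ContractsTo Z₂ w₂ := by
  intro Z W h
  induction h using Relation.ReflTransGen.head_induction_on with
  | refl => exact fun {w₁ w₂} e => ⟨w₁, w₂, e, .refl, .refl⟩
  | head step _ ih =>
    intro w₁ w₂ e
    obtain ⟨Y₁, Y₂, hY, hc1, hc2⟩ := ih e
    cases step with
    | @mk p q g h hD =>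
      rcases append_eq_append_cons (hY ▸ rfl : Y₁ ++ Y₂ = p ++ L.mul g h :: q) with
        ⟨q₁, hY₁, hq⟩ | ⟨p₂, hY₂, hp⟩
      · refine ⟨p ++ g :: h :: q₁, Y₂, ?_, ?_, hc2⟩
        · rw [hq]; simp [List.append_assoc]
        · exact Relation.ReflTransGen.head (hY₁ ▸ Contr.mk (L := L) p q₁ hD) hc1
      · refine ⟨Y₁, p₂ ++ g :: h :: q, ?_, hc1, ?_⟩
        · rw [hp]; simp [List.append_assoc]
        · exact Relation.ReflTransGen.head (hY₂ ▸ Contr.mk (L := L) p₂ q hD) hc2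

lemma coconfluence (hID : L.InvDecomp) :
    ∀ (w Z₁ Z₂ : List G), L.ContractsTo Z₁ w → L.ContractsTo Z₂ w →
      ∃ Z, L.ContractsTo Z Z₁ ∧ L.ContractsTo Z Z₂ := by
  intro w
  induction w with
  | nil =>
    intro Z₁ Z₂ h1 h2
    rw [L.contractsTo_nil h1, L.contractsTo_nil h2]
    exact ⟨[], .refl, .refl⟩
  | cons x w ih =>
    intro Z₁ Z₂ h1 h2
    obtain ⟨A₁, T₁, rfl, hA₁, hT₁⟩ := L.contractsTo_split h1 (w₁ := [x]) rfl
    obtain ⟨A₂, T₂, rfl, hA₂, hT₂⟩ := L.contractsTo_split h2 (w₁ := [x]) rfl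
    obtain ⟨Zh, hZ1, hZ2⟩ := L.merge hID (L.evalsTo_of_contractsTo_single hA₁)
      (L.evalsTo_of_contractsTo_single hA₂)
    obtain ⟨Zt, ht1, ht2⟩ := ih T₁ T₂ hT₁ hT₂
    exact ⟨Zh ++ Zt, L.contractsTo_append_s7 hZ1 ht1, L.contractsTo_append_s7 hZ2 ht2⟩

lemma contr_wedge (hID : L.InvDecomp) {w w' : List G} (h : L.Contr w w') :
    ∃ Z, L.ContractsTo Z w ∧ L.ContractsTo Z w' := by
  cases h with
  | @mk p q g h hD =>
    obtain ⟨P, S, hP, hS, hPS⟩ := L.key_s7 hID (EvalsTo.mul (L := L) (.single g) (.single h) hD)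
    obtain ⟨r, rest, hPe, htr⟩ := L.exists_head_of_contr_unit hP
    subst hPe
    obtain ⟨init, y, hSe, hsy⟩ := L.exists_last_of_contr_unit hS
    subst hSe
    refine ⟨p ++ ((r :: rest) ++ L.mul g h :: ((init ++ [y]) ++ q)), ?_, ?_⟩
    · -- contracts to p ++ g :: h :: q
      have c1 := L.contractsTo_context hPS p q
      have c1' : L.ContractsTo (p ++ ((r :: rest) ++ L.mul g h :: ((init ++ [y]) ++ q)))
          (p ++ g :: h :: q) := by
        simpa [List.append_assoc] using c1
      exact c1'
    · -- contracts to p ++ mul g h :: q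
      have k1 : L.ContractsTo (p ++ ((r :: rest) ++ L.mul g h :: ((init ++ [y]) ++ q)))
          (p ++ L.mul g h :: ((init ++ [y]) ++ q)) := by
        have := L.kill_left hP (L.mul g h) rfl p ((init ++ [y]) ++ q)
        simpa [List.append_assoc] using this
      have k2 : L.ContractsTo (p ++ L.mul g h :: ((init ++ [y]) ++ q))
          (p ++ L.mul g h :: q) := by
        have := L.kill_right hS (L.mul g h) rfl p q
        simpa [List.append_assoc] using this
      exact k1.trans k2

lemma wordEquiv_ancestor (hID : L.InvDecomp) {w w' : List G} (h : L.WordEquiv w w') :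
    ∃ Z, L.ContractsTo Z w ∧ L.ContractsTo Z w' := by
  induction h with
  | rel a b hab => exact L.contr_wedge hID hab
  | refl a => exact ⟨a, .refl, .refl⟩
  | symm a b _ ih => exact ⟨ih.choose, ih.choose_spec.2, ih.choose_spec.1⟩
  | trans a b c _ _ ih1 ih2 =>
    obtain ⟨Z₁, h1a, h1b⟩ := ih1
    obtain ⟨Z₂, h2b, h2c⟩ := ih2
    obtain ⟨Z, hZ1, hZ2⟩ := L.coconfluence hID b Z₁ Z₂ h1b h2b
    exact ⟨Z, hZ1.trans h1a, hZ2.trans h2c⟩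

lemma contractsTo_wordEquiv {w v : List G} (h : L.ContractsTo w v) : L.WordEquiv w v := by
  induction h with
  | refl => exact Relation.EqvGen.refl _
  | tail _ step ih => exact Relation.EqvGen.trans _ _ _ ih (Relation.EqvGen.rel _ _ step)

end Aux

end LocalGroupoid


/-- If a local groupoid is globally associative (all defined
bracketings of any composable tuple agree) and satisfies the inverse-decomposition
property, then the completion map `G → AC(G)` is injective; conversely, if the
completion map is injective then the local groupoid is globally associative. -/
theorem globallyAssociative_iff_completion_injective {G M : Type*}
    (L : LocalGroupoid G M) :
    ((L.GloballyAssociative ∧ L.InvDecomp) → Function.Injective L.completion) ∧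
    (Function.Injective L.completion → L.GloballyAssociative) := by
  constructor
  · rintro ⟨hGA, hID⟩ g h hgh
    have hrel : L.WordEquiv [g] [h] := Quotient.exact hgh
    obtain ⟨Z, h1, h2⟩ := L.wordEquiv_ancestor hID hrel
    exact hGA Z g h (L.evalsTo_of_contractsTo_single h1) (L.evalsTo_of_contractsTo_single h2)
  · intro hInj w g h e1 e2
    apply hInj
    apply Quotient.sound
    show L.WordEquiv [g] [h]
    exact Relation.EqvGen.trans _ _ _
      (Relation.EqvGen.symm _ _ (L.contractsTo_wordEquiv (L.evalsTo_contractsTo e1)))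
      (L.contractsTo_wordEquiv (L.evalsTo_contractsTo e2))
end
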